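/- Let μ ∈ ℂ. Then every function ψ : ℂ → ℂ that is twice complex differentiable on ℂ and satisfies −ψ''(η) + η²·ψ(η) = (μ + 2)·ψ(η) for all η ∈ ℂ is of the form ψ(η) = e^{−η²/2}·[ c̃₁·M(−(1+μ)/4, 1/2, η²) + c̃₂·η·M((1−μ)/4, 3/2, η²) ] for some constants c̃₁, c̃₂ ∈ ℂ. -/

import Mathlib

open Complex

/-- Rising Pochhammer symbol in `ℂ`. -/
noncomputable def pochC (x : ℂ) (n : ℕ) : ℂ := ∏ i ∈ Finset.range n, (x + (i : ℂ))

/-- Kummer's confluent hypergeometric function of the first kind. -/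
noncomputable def kummerM (a c ζ : ℂ) : ℂ :=
  ∑' n : ℕ, pochC a n / pochC c n * ζ ^ n / (n.factorial : ℂ)
lemma entire_deriv {f : ℂ → ℂ} (hf : Differentiable ℂ f) : Differentiable ℂ (deriv f) :=
  ((contDiff_infty_iff_deriv.mp hf.contDiff).2).differentiable (by simp)

lemma entire_iteratedDeriv_add {f g : ℂ → ℂ} (hf : Differentiable ℂ f)
    (hg : Differentiable ℂ g) (n : ℕ) (x : ℂ) :
    iteratedDeriv n (fun z => f z + g z) x = iteratedDeriv n f x + iteratedDeriv n g x := by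
  simp_rw [← iteratedDerivWithin_univ]
  exact iteratedDerivWithin_add (Set.mem_univ x) uniqueDiffOn_univ
    hf.contDiff.contDiffWithinAt hg.contDiff.contDiffWithinAt

lemma entire_iteratedDeriv_const_mul {f : ℂ → ℂ} (hf : Differentiable ℂ f) (c : ℂ) (n : ℕ)
    (x : ℂ) : iteratedDeriv n (fun z => c * f z) x = c * iteratedDeriv n f x := by
  simp_rw [← iteratedDerivWithin_univ]
  exact iteratedDerivWithin_const_mul (Set.mem_univ x) uniqueDiffOn_univ c
    hf.contDiff.contDiffWithinAt

lemma iteratedDeriv_id_mul {g : ℂ → ℂ} (hg : Differentiable ℂ g) (n : ℕ) :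
    iteratedDeriv (n + 1) (fun η => η * g η) 0 = ((n : ℂ) + 1) * iteratedDeriv n g 0 := by
  induction n generalizing g with
  | zero =>
    have hd : deriv (fun η : ℂ => η * g η) = fun η => g η + η * deriv g η := by
      funext η
      rw [deriv_fun_mul differentiableAt_fun_id (hg η)]
      simp
    rw [iteratedDeriv_succ', hd]
    simp
  | succ n ih =>
    have hd : deriv (fun η : ℂ => η * g η) = fun η => g η + η * deriv g η := by
      funext η
      rw [deriv_fun_mul differentiableAt_fun_id (hg η)]
      simp
    have hg' : Differentiable ℂ (deriv g) := entire_deriv hg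
    have h5 : Differentiable ℂ (fun η : ℂ => η * deriv g η) := differentiable_fun_id.mul hg'
    rw [iteratedDeriv_succ', hd,
      entire_iteratedDeriv_add hg h5 (n + 1) 0,
      ih hg', ← iteratedDeriv_succ']
    push_cast
    ring

lemma fact_even (k : ℕ) :
    (((2 * k).factorial : ℕ) : ℂ) = 4 ^ k * pochC (1 / 2) k * (k.factorial : ℂ) := by
  induction k with
  | zero => simp [pochC]
  | succ k ih =>
    have e3 : (((k + 1).factorial : ℕ) : ℂ) = ((k : ℂ) + 1) * (k.factorial : ℂ) := by
      push_cast [Nat.factorial_succ]; ring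
    have hp : pochC (1 / 2 : ℂ) (k + 1) = pochC (1 / 2) k * (1 / 2 + (k : ℂ)) :=
      Finset.prod_range_succ _ _
    rw [show 2 * (k + 1) = (2 * k + 1) + 1 from by ring, Nat.factorial_succ,
      Nat.factorial_succ, hp, e3]
    push_cast
    rw [ih]
    ring

lemma fact_odd (k : ℕ) :
    (((2 * k + 1).factorial : ℕ) : ℂ) = 4 ^ k * pochC (3 / 2) k * (k.factorial : ℂ) := by
  induction k with
  | zero => simp [pochC]
  | succ k ih =>
    have e3 : (((k + 1).factorial : ℕ) : ℂ) = ((k : ℂ) + 1) * (k.factorial : ℂ) := by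
      push_cast [Nat.factorial_succ]; ring
    have hp : pochC (3 / 2 : ℂ) (k + 1) = pochC (3 / 2) k * (3 / 2 + (k : ℂ)) :=
      Finset.prod_range_succ _ _
    rw [show 2 * (k + 1) + 1 = (2 * k + 1) + 1 + 1 from by ring, Nat.factorial_succ,
      Nat.factorial_succ, hp, e3]
    push_cast
    rw [ih]
    ring

theorem statement19 (μ : ℂ) (ψ : ℂ → ℂ)
    (h1 : Differentiable ℂ ψ)
    (h2 : Differentiable ℂ (deriv ψ))
    (hODE : ∀ η : ℂ, -(deriv (deriv ψ) η) + η ^ 2 * ψ η = (μ + 2) * ψ η) :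
    ∃ c₁ c₂ : ℂ, ∀ η : ℂ,
      ψ η = Complex.exp (-η ^ 2 / 2) *
        (c₁ * kummerM (-(1 + μ) / 4) (1 / 2) (η ^ 2)
          + c₂ * η * kummerM ((1 - μ) / 4) (3 / 2) (η ^ 2)) := by
  set E : ℂ → ℂ := fun η => Complex.exp (η ^ 2 / 2) with hEdef
  set φ : ℂ → ℂ := fun η => E η * ψ η with hφdef
  -- derivative of E
  have hE : ∀ η : ℂ, HasDerivAt E (η * E η) η := by
    intro η
    have hq : HasDerivAt (fun η : ℂ => η ^ 2 / 2) η η := by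
      simpa using (hasDerivAt_pow 2 η).div_const 2
    simpa [hEdef, mul_comm] using hq.cexp
  have hEdiff : Differentiable ℂ E := fun η => (hE η).differentiableAt
  have hφdiff : Differentiable ℂ φ := hEdiff.mul h1
  -- second derivative of ψ from the ODE
  have hψ'' : ∀ η : ℂ, deriv (deriv ψ) η = η ^ 2 * ψ η - (μ + 2) * ψ η := by
    intro η; linear_combination (-1 : ℂ) * hODE η
  -- first derivative of φ
  have hderφ : ∀ η : ℂ, HasDerivAt φ (E η * (η * ψ η + deriv ψ η)) η := by
    intro η
    have h := (hE η).mul (h1 η).hasDerivAt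
    have : η * E η * ψ η + E η * deriv ψ η = E η * (η * ψ η + deriv ψ η) := by ring
    rw [this] at h
    exact h
  have hφ' : deriv φ = fun η => E η * (η * ψ η + deriv ψ η) :=
    funext fun η => (hderφ η).deriv
  have hdφdiff : Differentiable ℂ (deriv φ) := entire_deriv hφdiff
  -- second derivative of φ
  have hd2 : ∀ η : ℂ, deriv (deriv φ) η = 2 * η * deriv φ η - (μ + 1) * φ η := by
    intro η
    have hinner : HasDerivAt (fun η : ℂ => η * ψ η + deriv ψ η)
        (ψ η + η * deriv ψ η + deriv (deriv ψ) η) η := by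
      have h := ((hasDerivAt_id η).mul (h1 η).hasDerivAt).add (h2 η).hasDerivAt
      have e : 1 * ψ η + id η * deriv ψ η + deriv (deriv ψ) η
          = ψ η + η * deriv ψ η + deriv (deriv ψ) η := by simp
      rw [e] at h
      exact h
    have hder : HasDerivAt (deriv φ)
        (η * E η * (η * ψ η + deriv ψ η)
          + E η * (ψ η + η * deriv ψ η + deriv (deriv ψ) η)) η := by
      rw [hφ']
      exact (hE η).mul hinner
    rw [hder.deriv, hφ', hφdef]
    simp only []
    linear_combination E η * hψ'' η
  -- recurrence for iterated derivatives at 0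
  have hrec : ∀ n : ℕ, iteratedDeriv (n + 2) φ 0
      = (2 * (n : ℂ) - μ - 1) * iteratedDeriv n φ 0 := by
    intro n
    have hφ2' : deriv (deriv φ) = fun η => 2 * (η * deriv φ η) + -(μ + 1) * φ η := by
      funext η; rw [hd2 η]; ring
    have h5 : Differentiable ℂ (fun η : ℂ => η * deriv φ η) := differentiable_fun_id.mul hdφdiff
    have h6 : Differentiable ℂ (fun η : ℂ => 2 * (η * deriv φ η)) := h5.const_mul 2
    have h7 : Differentiable ℂ (fun η : ℂ => -(μ + 1) * φ η) := hφdiff.const_mul _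
    have hmul : iteratedDeriv n (fun η : ℂ => η * deriv φ η) 0
        = (n : ℂ) * iteratedDeriv n φ 0 := by
      cases n with
      | zero => simp
      | succ m =>
        rw [iteratedDeriv_id_mul hdφdiff m, ← iteratedDeriv_succ']
        push_cast; ring
    rw [show n + 2 = (n + 1) + 1 from rfl, iteratedDeriv_succ', iteratedDeriv_succ', hφ2',
      entire_iteratedDeriv_add h6 h7 n 0,
      entire_iteratedDeriv_const_mul h5 2 n 0,
      entire_iteratedDeriv_const_mul hφdiff (-(μ + 1)) n 0, hmul]
    ring
  -- closed forms
  have heven : ∀ k : ℕ, iteratedDeriv (2 * k) φ 0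
      = φ 0 * 4 ^ k * pochC (-(1 + μ) / 4) k := by
    intro k
    induction k with
    | zero => simp [pochC]
    | succ k ih =>
      have hp : pochC (-(1 + μ) / 4) (k + 1) = pochC (-(1 + μ) / 4) k * (-(1 + μ) / 4 + k) :=
        Finset.prod_range_succ _ _
      rw [show 2 * (k + 1) = 2 * k + 2 from by ring, hrec (2 * k), ih, hp]
      push_cast
      ring
  have hodd : ∀ k : ℕ, iteratedDeriv (2 * k + 1) φ 0
      = deriv φ 0 * 4 ^ k * pochC ((1 - μ) / 4) k := by
    intro k
    induction k with
    | zero => simp [pochC, iteratedDeriv_one]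
    | succ k ih =>
      have hp : pochC ((1 - μ) / 4) (k + 1) = pochC ((1 - μ) / 4) k * ((1 - μ) / 4 + k) :=
        Finset.prod_range_succ _ _
      rw [show 2 * (k + 1) + 1 = (2 * k + 1) + 2 from by ring, hrec (2 * k + 1), ih, hp]
      push_cast
      ring
  refine ⟨φ 0, deriv φ 0, fun η => ?_⟩
  -- Taylor series of φ
  have hsum : HasSum (fun n : ℕ => ((n.factorial : ℕ) : ℂ)⁻¹ * (η ^ n * iteratedDeriv n φ 0))
      (φ η) := by
    have h := Complex.hasSum_taylorSeries_of_entire hφdiff 0 η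
    simpa [smul_eq_mul, sub_zero] using h
  set f : ℕ → ℂ := fun n => ((n.factorial : ℕ) : ℂ)⁻¹ * (η ^ n * iteratedDeriv n φ 0) with hfdef
  have hse : Summable fun k => f (2 * k) :=
    hsum.summable.comp_injective (fun a b hab => by omega)
  have hso : Summable fun k => f (2 * k + 1) :=
    hsum.summable.comp_injective (fun a b hab => by omega)
  have hsplit : (∑' k, f (2 * k)) + (∑' k, f (2 * k + 1)) = φ η := by
    rw [tsum_even_add_odd hse hso, hsum.tsum_eq]
  -- even part
  have he2 : ∀ k : ℕ, f (2 * k)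
      = φ 0 * (pochC (-(1 + μ) / 4) k / pochC (1 / 2) k * (η ^ 2) ^ k / (k.factorial : ℂ)) := by
    intro k
    have h4 := fact_even k
    have hz : (((2 * k).factorial : ℕ) : ℂ) ≠ 0 := Nat.cast_ne_zero.mpr (Nat.factorial_ne_zero _)
    rw [h4] at hz
    have h4k : (4 : ℂ) ^ k ≠ 0 := by
      intro h0; exact hz (by rw [h0]; ring)
    have hpk : pochC (1 / 2 : ℂ) k ≠ 0 := by
      intro h0; exact hz (by rw [h0]; ring)
    have hfk : ((k.factorial : ℕ) : ℂ) ≠ 0 := Nat.cast_ne_zero.mpr (Nat.factorial_ne_zero _)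
    rw [hfdef]
    simp only []
    rw [heven k, h4, pow_mul]
    field_simp
  -- odd part
  have ho2 : ∀ k : ℕ, f (2 * k + 1)
      = (deriv φ 0 * η)
        * (pochC ((1 - μ) / 4) k / pochC (3 / 2) k * (η ^ 2) ^ k / (k.factorial : ℂ)) := by
    intro k
    have h4 := fact_odd k
    have hz : (((2 * k + 1).factorial : ℕ) : ℂ) ≠ 0 :=
      Nat.cast_ne_zero.mpr (Nat.factorial_ne_zero _)
    rw [h4] at hz
    have h4k : (4 : ℂ) ^ k ≠ 0 := by
      intro h0; exact hz (by rw [h0]; ring)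
    have hpk : pochC (3 / 2 : ℂ) k ≠ 0 := by
      intro h0; exact hz (by rw [h0]; ring)
    have hfk : ((k.factorial : ℕ) : ℂ) ≠ 0 := Nat.cast_ne_zero.mpr (Nat.factorial_ne_zero _)
    rw [hfdef]
    simp only []
    rw [hodd k, h4, pow_succ, pow_mul]
    field_simp
  have heq_even : (∑' k, f (2 * k)) = φ 0 * kummerM (-(1 + μ) / 4) (1 / 2) (η ^ 2) := by
    rw [tsum_congr he2, tsum_mul_left, kummerM]
  have heq_odd : (∑' k, f (2 * k + 1))
      = deriv φ 0 * η * kummerM ((1 - μ) / 4) (3 / 2) (η ^ 2) := by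
    rw [tsum_congr ho2, tsum_mul_left, kummerM]
  have key : φ η = φ 0 * kummerM (-(1 + μ) / 4) (1 / 2) (η ^ 2)
      + deriv φ 0 * η * kummerM ((1 - μ) / 4) (3 / 2) (η ^ 2) := by
    rw [← hsplit, heq_even, heq_odd]
  rw [← key, hφdef]
  simp only [hEdef]
  rw [← mul_assoc, ← Complex.exp_add, show -η ^ 2 / 2 + η ^ 2 / 2 = 0 from by ring,
    Complex.exp_zero, one_mul]
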